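/- arXiv:0710.3879 — 2 statements merged into one kernel-verified Lean document; each statement's English description precedes it below -/
import Mathlib

section
/- Let Λ, m be real numbers, K(r) = 2m(1 + cos r)·sin r + (Λ/3)(2cos r + cos 2r), and on ℝ⁴ with coordinates (x, y, u, r) let G(x,y,u,r) = 2·diag(1,1,0,0) + (λ e₄ᵀ + e₄ λᵀ) − 4K(r)·λ λᵀ, where λ = (−y, x, 1, 0) and e₄ = (0,0,0,1). Then for every (x,y,u,r) ∈ ℝ⁴: (i) det G(x,y,u,r) = −4 (so G is everywhere nondegenerate); and (ii) there exists an invertible real 4×4 matrix P with Pᵀ G(x,y,u,r) P = diag(1, 1, 1, −1), i.e. G has Lorentzian signature (3,1) at every point. -/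
open Matrix Real

set_option maxHeartbeats 1000000 in
/-- The coordinate matrix G of the conformal metric ĝ of the Taub–NUT example has
determinant −4 at every point and Lorentzian signature (3,1). -/
theorem taub_nut_conformal_metric_lorentzian
    (Λ m : ℝ) (K : ℝ → ℝ)
    (hK : ∀ r : ℝ, K r = 2 * m * (1 + Real.cos r) * Real.sin r +
      (Λ / 3) * (2 * Real.cos r + Real.cos (2 * r)))
    (lam : ℝ → ℝ → Fin 4 → ℝ) (hlam : ∀ x y : ℝ, lam x y = ![-y, x, 1, 0])
    (e₄ : Fin 4 → ℝ) (he₄ : e₄ = ![0, 0, 0, 1])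
    (G : ℝ → ℝ → ℝ → ℝ → Matrix (Fin 4) (Fin 4) ℝ)
    (hG : ∀ x y u r : ℝ, G x y u r =
      (2 : ℝ) • Matrix.diagonal ![1, 1, 0, 0] +
      (Matrix.vecMulVec (lam x y) e₄ + Matrix.vecMulVec e₄ (lam x y)) -
      (4 * K r) • Matrix.vecMulVec (lam x y) (lam x y)) :
    ∀ x y u r : ℝ,
      (G x y u r).det = -4 ∧
      ∃ P : Matrix (Fin 4) (Fin 4) ℝ, IsUnit P.det ∧
        Pᵀ * G x y u r * P = Matrix.diagonal ![1, 1, 1, -1] := by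
  have det4 : ∀ a b c d e f g h i j k l mm n o p : ℝ,
      (!![a,b,c,d; e,f,g,h; i,j,k,l; mm,n,o,p] : Matrix (Fin 4) (Fin 4) ℝ).det =
      a*f*k*p - a*f*l*o - a*g*j*p + a*g*l*n + a*h*j*o - a*h*k*n
      - b*e*k*p + b*e*l*o + b*g*i*p - b*g*l*mm - b*h*i*o + b*h*k*mm
      + c*e*j*p - c*e*l*n - c*f*i*p + c*f*l*mm + c*h*i*n - c*h*j*mm
      - d*e*j*o + d*e*k*n + d*f*i*o - d*f*k*mm - d*g*i*n + d*g*j*mm := by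
    intro a b c d e f g h i j k l mm n o p
    rw [show (!![a,b,c,d; e,f,g,h; i,j,k,l; mm,n,o,p] : Matrix (Fin 4) (Fin 4) ℝ).det = _ from
      Matrix.det_succ_row_zero _]
    simp [Fin.sum_univ_succ, Matrix.det_fin_three, Fin.succAbove, - Fin.val_fin_lt,
      Matrix.submatrix_apply, Fin.castSucc, Fin.castAdd, Fin.castLE]
    ring
  intro x y u r
  have hGmat : G x y u r = !![2 - 4*K r*y^2, 4*K r*x*y, 4*K r*y, -y;
                              4*K r*x*y, 2 - 4*K r*x^2, -(4*K r)*x, x;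
                              4*K r*y, -(4*K r)*x, -(4*K r), 1;
                              -y, x, 1, 0] := by
    rw [hG, hlam, he₄]
    ext i j
    fin_cases i <;> fin_cases j <;>
      simp [Matrix.vecMulVec_apply, Matrix.diagonal]
    all_goals (first | (left; ring1) | ring1)
  obtain ⟨s, hs2⟩ : ∃ s : ℝ, s ^ 2 = 2 := ⟨Real.sqrt 2, Real.sq_sqrt (by norm_num)⟩
  refine ⟨?_, ?_⟩
  case _ =>
    rw [hGmat, det4]
    ring
  case _ =>
    refine ⟨!![s/2, 0, 0, 0;
               0, s/2, 0, 0;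
               y*s/2, -(x*s/2), 1, -1;
               0, 0, (1 + 4*K r)/2, 1 - (1 + 4*K r)/2], ?_, ?_⟩
    · have hdP : (!![s/2, 0, 0, 0;
               0, s/2, 0, 0;
               y*s/2, -(x*s/2), 1, -1;
               0, 0, (1 + 4*K r)/2, 1 - (1 + 4*K r)/2] : Matrix (Fin 4) (Fin 4) ℝ).det = 1/2 := by
        rw [det4]
        linear_combination hs2 / 4
      rw [hdP]
      exact IsUnit.of_mul_eq_one 2 (by norm_num)
    · rw [hGmat]
      ext i j
      fin_cases i <;> fin_cases j <;>
        simp [Matrix.mul_apply, Fin.sum_univ_four, Matrix.diagonal, Matrix.cons_transpose,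
          Matrix.head_transpose, Matrix.vecHead, Matrix.vecTail]
      all_goals (first | ring1 | linear_combination hs2 / 2)
end

section
/- Let f : ℝ → ℝ be twice continuously differentiable with f'(y) ≠ 0 for all y. On ℝ³ with coordinates (x, y, u), define at each point P = (x, y, u) the ℂ-valued linear forms λ_P(v) = −(2/f'(y))·(v_u + f(y)·v_x) and μ(v) = v_x + i·v_y on v = (v_x, v_y, v_u) ∈ ℝ³, and set c(y) = i·f''(y)/(2 f'(y)). Then for every point P and all vectors v, w ∈ ℝ³: (D_v λ)_P(w) − (D_w λ)_P(v) = i·(μ(v)·conj(μ(w)) − μ(w)·conj(μ(v))) + (c(y)·μ(v) + conj(c(y))·conj(μ(v)))·λ_P(w) − (c(y)·μ(w) + conj(c(y))·conj(μ(w)))·λ_P(v), where (D_v λ)_P(w) is the directional derivative at P in direction v of P ↦ λ_P(w). That is, dλ = i μ∧μ̄ + (cμ + c̄μ̄)∧λ with the convention (α∧β)(v,w) = α(v)β(w) − α(w)β(v). -/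
open Complex

set_option maxHeartbeats 1000000 in
/-- For the second example's CR structure on ℝ³, with λ_P(v) = −(2/f'(y))(v_u + f(y) v_x)
and μ(v) = v_x + i v_y, the structure equation dλ = i μ∧μ̄ + (cμ + c̄μ̄)∧λ holds with
c(y) = i f''(y)/(2 f'(y)). -/
theorem second_example_structure_equation
    (f : ℝ → ℝ) (hf : ContDiff ℝ 2 f) (hf' : ∀ y : ℝ, deriv f y ≠ 0)
    (lam : ℝ × ℝ × ℝ → ℝ × ℝ × ℝ → ℂ)
    (hlam : ∀ P v : ℝ × ℝ × ℝ,
      lam P v = -((2 : ℂ) / Complex.ofReal (deriv f P.2.1)) * ((v.2.2 : ℂ) + (f P.2.1 : ℂ) * (v.1 : ℂ)))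
    (mu : ℝ × ℝ × ℝ → ℂ)
    (hmu : ∀ v : ℝ × ℝ × ℝ, mu v = (v.1 : ℂ) + Complex.I * (v.2.1 : ℂ))
    (c : ℝ → ℂ)
    (hc : ∀ y : ℝ, c y = Complex.I * (Complex.ofReal (deriv (deriv f) y)) / (2 * Complex.ofReal (deriv f y))) :
    ∀ P v w : ℝ × ℝ × ℝ,
      fderiv ℝ (fun Q => lam Q w) P v - fderiv ℝ (fun Q => lam Q v) P w =
        Complex.I * (mu v * (starRingEnd ℂ) (mu w) - mu w * (starRingEnd ℂ) (mu v)) +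
        (c P.2.1 * mu v + (starRingEnd ℂ) (c P.2.1) * (starRingEnd ℂ) (mu v)) * lam P w -
        (c P.2.1 * mu w + (starRingEnd ℂ) (c P.2.1) * (starRingEnd ℂ) (mu w)) * lam P v := by
  intro P v w
  set y := P.2.1 with hy
  set d : ℝ := deriv f y with hd0
  set d2 : ℝ := deriv (deriv f) y with hd20
  have hfd : Differentiable ℝ f := hf.differentiable (by norm_num)
  have hfd' : Differentiable ℝ (deriv f) := (hf.iterate_deriv' 1 1).differentiable (by norm_num)
  have hdne : (d : ℂ) ≠ 0 := by exact_mod_cast hf' y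
  -- derivative of the coefficient function for a fixed vector u
  have apply_key : ∀ u z : ℝ × ℝ × ℝ, fderiv ℝ (fun Q => lam Q u) P z =
      ((-2 * ((d : ℂ) * (u.1 : ℂ)) * (d : ℂ) -
          -2 * ((u.2.2 : ℂ) + (f y : ℂ) * (u.1 : ℂ)) * (d2 : ℂ)) / ((d : ℂ)) ^ 2) * (z.2.1 : ℂ) := by
    intro u z
    have h1 : HasDerivAt (fun t : ℝ => ((f t : ℂ))) ((deriv f y : ℝ)) y :=
      ((hfd y).hasDerivAt).ofReal_comp
    have hN : HasDerivAt (fun t : ℝ => (-2 : ℂ) * ((u.2.2 : ℂ) + (f t : ℂ) * (u.1 : ℂ)))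
        (-2 * ((d : ℂ) * (u.1 : ℂ))) y := by
      have := ((h1.mul_const ((u.1 : ℂ))).const_add ((u.2.2 : ℂ))).const_mul (-2 : ℂ)
      simpa using this
    have hD : HasDerivAt (fun t : ℝ => ((deriv f t : ℝ) : ℂ)) ((d2 : ℝ)) y :=
      ((hfd' y).hasDerivAt).ofReal_comp
    have hG : HasDerivAt (fun t : ℝ =>
        (-2 : ℂ) * ((u.2.2 : ℂ) + (f t : ℂ) * (u.1 : ℂ)) / (((deriv f t : ℝ) : ℂ)))
        ((-2 * ((d : ℂ) * (u.1 : ℂ)) * (d : ℂ) -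
          -2 * ((u.2.2 : ℂ) + (f y : ℂ) * (u.1 : ℂ)) * (d2 : ℂ)) / ((d : ℂ)) ^ 2) y :=
      hN.div hD hdne
    have hL : HasFDerivAt (fun Q : ℝ × ℝ × ℝ => Q.2.1)
        ((ContinuousLinearMap.fst ℝ ℝ ℝ).comp (ContinuousLinearMap.snd ℝ ℝ (ℝ × ℝ))) P :=
      ((ContinuousLinearMap.fst ℝ ℝ ℝ).comp (ContinuousLinearMap.snd ℝ ℝ (ℝ × ℝ))).hasFDerivAt
    have hF := hG.hasFDerivAt.comp P hL
    have heq : (fun Q : ℝ × ℝ × ℝ => lam Q u) = (fun t : ℝ =>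
        (-2 : ℂ) * ((u.2.2 : ℂ) + (f t : ℂ) * (u.1 : ℂ)) / (((deriv f t : ℝ) : ℂ))) ∘
        (fun Q : ℝ × ℝ × ℝ => Q.2.1) := by
      funext Q
      simp only [Function.comp, hlam]
      ring
    rw [heq, hF.fderiv]
    simp [real_smul, mul_comm]
  rw [apply_key w v, apply_key v w, hlam, hlam, hmu, hmu, hc]
  simp only [map_add, map_mul, map_div₀, map_neg, map_ofNat, Complex.conj_ofReal, Complex.conj_I,
    ← hy, ← hd0, ← hd20]
  field_simp
  ring_nf
  simp only [Complex.I_sq]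
  ring
end
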